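/- Let Σ_x be a q×q symmetric matrix with vᵀΣ_x v ≥ (1/M₁)‖v‖₂² for all v, and let S be a symmetric matrix such that |vᵀ(S − Σ_x)v| ≤ 1/(L M₁) for every 2s-sparse unit vector v, with L > 27. Then S satisfies the lower-RE condition vᵀSv ≥ α‖v‖₂² − ζ‖v‖₁² for all v ∈ ℝ^q, with α = (1/M₁)(1 − 27/L) and ζ = 27/(s M₁ L). -/

import Mathlib

open Matrix

section Helpers

variable {q : ℕ}

private lemma supp_smul (c : ℝ) (hc : c ≠ 0) (x : Fin q → ℝ) :
    (Finset.univ.filter (fun i => (c • x) i ≠ 0)) = (Finset.univ.filter (fun i => x i ≠ 0)) := by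
  apply Finset.filter_congr
  intro i _
  simp [Pi.smul_apply, smul_eq_mul, hc]

private lemma sum_sq_smul (c : ℝ) (x : Fin q → ℝ) :
    ∑ i, (c • x) i ^ 2 = c ^ 2 * ∑ i, x i ^ 2 := by
  simp [Pi.smul_apply, smul_eq_mul, mul_pow, Finset.mul_sum]

private lemma dot_smul_smul (Δ : Matrix (Fin q) (Fin q) ℝ) (a b : ℝ) (u w : Fin q → ℝ) :
    (a • u) ⬝ᵥ Δ.mulVec (b • w) = a * b * (u ⬝ᵥ Δ.mulVec w) := by
  rw [smul_dotProduct, mulVec_smul, dotProduct_smul]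
  simp [smul_eq_mul]; ring

private lemma zero_of_sum_sq (x : Fin q → ℝ) (h : ∑ i, x i ^ 2 = 0) : ∀ i, x i = 0 := by
  intro i
  have := (Finset.sum_eq_zero_iff_of_nonneg (fun i _ => sq_nonneg (x i))).mp h i (Finset.mem_univ i)
  exact pow_eq_zero_iff (n := 2) (by norm_num) |>.mp this

private lemma quad_scaled (Δ : Matrix (Fin q) (Fin q) ℝ) (δ : ℝ) (s : ℕ)
    (hquad : ∀ x : Fin q → ℝ, (∑ i, x i ^ 2 = 1) →
      ((Finset.univ.filter (fun i => x i ≠ 0)).card ≤ 2 * s) → |x ⬝ᵥ Δ.mulVec x| ≤ δ) :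
    ∀ x : Fin q → ℝ, ((Finset.univ.filter (fun i => x i ≠ 0)).card ≤ 2 * s) →
      |x ⬝ᵥ Δ.mulVec x| ≤ δ * ∑ i, x i ^ 2 := by
  intro x hx
  have hA : (0:ℝ) ≤ ∑ i, x i ^ 2 := Finset.sum_nonneg fun i _ => sq_nonneg _
  rcases eq_or_lt_of_le hA with h0 | hpos
  · have hx0 : x = 0 := funext (zero_of_sum_sq x h0.symm)
    simp [hx0]
  · set r := Real.sqrt (∑ i, x i ^ 2) with hr
    have hrpos : 0 < r := Real.sqrt_pos.mpr hpos
    have hrsq : r ^ 2 = ∑ i, x i ^ 2 := Real.sq_sqrt hA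
    set y := r⁻¹ • x with hy
    have h1 : ∑ i, y i ^ 2 = 1 := by
      rw [hy, sum_sq_smul, ← hrsq]
      field_simp
    have h2 : (Finset.univ.filter (fun i => y i ≠ 0)).card ≤ 2 * s := by
      rw [hy, supp_smul _ (inv_ne_zero hrpos.ne')]
      exact hx
    have h3 := hquad y h1 h2
    have h4 : y ⬝ᵥ Δ.mulVec y = r⁻¹ * r⁻¹ * (x ⬝ᵥ Δ.mulVec x) := dot_smul_smul Δ _ _ x x
    have h5 : x ⬝ᵥ Δ.mulVec x = r ^ 2 * (y ⬝ᵥ Δ.mulVec y) := by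
      rw [h4]; field_simp
    rw [h5, abs_mul, abs_of_nonneg (by positivity : (0:ℝ) ≤ r ^ 2), hrsq]
    calc (∑ i, x i ^ 2) * |y ⬝ᵥ Δ.mulVec y| ≤ (∑ i, x i ^ 2) * δ :=
          mul_le_mul_of_nonneg_left h3 hA
      _ = δ * ∑ i, x i ^ 2 := mul_comm _ _

private lemma bilin_sum (Δ : Matrix (Fin q) (Fin q) ℝ) (δ : ℝ) (s : ℕ)
    (hq2 : ∀ x : Fin q → ℝ, ((Finset.univ.filter (fun i => x i ≠ 0)).card ≤ 2 * s) →
      |x ⬝ᵥ Δ.mulVec x| ≤ δ * ∑ i, x i ^ 2)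
    (u w : Fin q → ℝ)
    (hu : (Finset.univ.filter (fun i => u i ≠ 0)).card ≤ s)
    (hw : (Finset.univ.filter (fun i => w i ≠ 0)).card ≤ s) :
    |u ⬝ᵥ Δ.mulVec w + w ⬝ᵥ Δ.mulVec u| ≤ δ * (∑ i, u i ^ 2 + ∑ i, w i ^ 2) := by
  have hsub : ∀ (x : Fin q → ℝ), (∀ i, x i ≠ 0 → u i ≠ 0 ∨ w i ≠ 0) →
      (Finset.univ.filter (fun i => x i ≠ 0)).card ≤ 2 * s := by
    intro x hx
    have : (Finset.univ.filter (fun i => x i ≠ 0)) ⊆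
        (Finset.univ.filter (fun i => u i ≠ 0)) ∪ (Finset.univ.filter (fun i => w i ≠ 0)) := by
      intro i hi
      simp only [Finset.mem_filter, Finset.mem_univ, true_and] at hi
      rcases hx i hi with h | h <;> simp [Finset.mem_union, h]
    calc (Finset.univ.filter (fun i => x i ≠ 0)).card ≤ _ := Finset.card_le_card this
      _ ≤ _ + _ := Finset.card_union_le _ _
      _ ≤ 2 * s := by omega
  have hxcard : ((Finset.univ.filter (fun i => (u + w) i ≠ 0)).card ≤ 2 * s) := by
    apply hsub; intro i hi
    by_contra hc
    push_neg at hc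
    exact hi (show u i + w i = 0 by rw [hc.1, hc.2, add_zero])
  have hycard : ((Finset.univ.filter (fun i => (u - w) i ≠ 0)).card ≤ 2 * s) := by
    apply hsub; intro i hi
    by_contra hc
    push_neg at hc
    exact hi (show u i - w i = 0 by rw [hc.1, hc.2, sub_zero])
  have e1 : (u + w) ⬝ᵥ Δ.mulVec (u + w) - (u - w) ⬝ᵥ Δ.mulVec (u - w)
      = 2 * (u ⬝ᵥ Δ.mulVec w + w ⬝ᵥ Δ.mulVec u) := by
    simp only [mulVec_add, mulVec_sub, dotProduct_add, dotProduct_sub, add_dotProduct,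
      sub_dotProduct]
    ring
  have e2 : ∑ i, (u + w) i ^ 2 + ∑ i, (u - w) i ^ 2 = 2 * (∑ i, u i ^ 2 + ∑ i, w i ^ 2) := by
    rw [← Finset.sum_add_distrib,
      show (∑ i, u i ^ 2 + ∑ i, w i ^ 2) = ∑ i, (u i ^ 2 + w i ^ 2) from Finset.sum_add_distrib.symm,
      Finset.mul_sum]
    apply Finset.sum_congr rfl
    intro i _
    simp only [Pi.add_apply, Pi.sub_apply]
    ring
  have b1 := hq2 _ hxcard
  have b2 := hq2 _ hycard
  have habs : |2 * (u ⬝ᵥ Δ.mulVec w + w ⬝ᵥ Δ.mulVec u)|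
      ≤ δ * ∑ i, (u + w) i ^ 2 + δ * ∑ i, (u - w) i ^ 2 := by
    rw [← e1]
    calc |_ - _| ≤ |(u + w) ⬝ᵥ Δ.mulVec (u + w)| + |(u - w) ⬝ᵥ Δ.mulVec (u - w)| := abs_sub _ _
      _ ≤ _ := add_le_add b1 b2
  rw [abs_mul, abs_of_nonneg (by norm_num : (0:ℝ) ≤ 2)] at habs
  have e3 : δ * ∑ i, (u + w) i ^ 2 + δ * ∑ i, (u - w) i ^ 2
      = 2 * (δ * (∑ i, u i ^ 2 + ∑ i, w i ^ 2)) := by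
    rw [← mul_add, e2]; ring
  linarith [habs, e3]

private lemma bilin (Δ : Matrix (Fin q) (Fin q) ℝ) (δ : ℝ) (s : ℕ) (hδ : 0 ≤ δ)
    (hsym : Δ.IsSymm)
    (hq2 : ∀ x : Fin q → ℝ, ((Finset.univ.filter (fun i => x i ≠ 0)).card ≤ 2 * s) →
      |x ⬝ᵥ Δ.mulVec x| ≤ δ * ∑ i, x i ^ 2)
    (u w : Fin q → ℝ)
    (hu : (Finset.univ.filter (fun i => u i ≠ 0)).card ≤ s)
    (hw : (Finset.univ.filter (fun i => w i ≠ 0)).card ≤ s) :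
    |u ⬝ᵥ Δ.mulVec w| ≤ δ * Real.sqrt (∑ i, u i ^ 2) * Real.sqrt (∑ i, w i ^ 2) := by
  have hbs := bilin_sum Δ δ s hq2
  have hA : (0:ℝ) ≤ ∑ i, u i ^ 2 := Finset.sum_nonneg fun i _ => sq_nonneg _
  have hB : (0:ℝ) ≤ ∑ i, w i ^ 2 := Finset.sum_nonneg fun i _ => sq_nonneg _
  have hsd : ∀ u' w' : Fin q → ℝ, u' ⬝ᵥ Δ.mulVec w' = w' ⬝ᵥ Δ.mulVec u' := by
    intro u' w'
    rw [dotProduct_mulVec, ← mulVec_transpose, hsym.eq, dotProduct_comm]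
  rcases eq_or_lt_of_le hA with h0 | hApos
  · have hu0 : u = 0 := funext (zero_of_sum_sq u h0.symm)
    simp only [hu0, zero_dotProduct]
    rw [abs_zero]
    positivity
  rcases eq_or_lt_of_le hB with h0 | hBpos
  · have hw0 : w = 0 := funext (zero_of_sum_sq w h0.symm)
    rw [hsd]
    simp only [hw0, zero_dotProduct]
    rw [abs_zero]
    positivity
  · set a := Real.sqrt (∑ i, u i ^ 2) with ha
    set b := Real.sqrt (∑ i, w i ^ 2) with hb
    have hapos : 0 < a := Real.sqrt_pos.mpr hApos
    have hbpos : 0 < b := Real.sqrt_pos.mpr hBpos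
    have hasq : a ^ 2 = ∑ i, u i ^ 2 := Real.sq_sqrt hA
    have hbsq : b ^ 2 = ∑ i, w i ^ 2 := Real.sq_sqrt hB
    set u' := a⁻¹ • u with hu'
    set w' := b⁻¹ • w with hw'
    have h1 : ∑ i, u' i ^ 2 = 1 := by
      rw [hu', sum_sq_smul, ← hasq]; field_simp
    have h2 : ∑ i, w' i ^ 2 = 1 := by
      rw [hw', sum_sq_smul, ← hbsq]; field_simp
    have hc1 : (Finset.univ.filter (fun i => u' i ≠ 0)).card ≤ s := by
      rw [hu', supp_smul _ (inv_ne_zero hapos.ne')]; exact hu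
    have hc2 : (Finset.univ.filter (fun i => w' i ≠ 0)).card ≤ s := by
      rw [hw', supp_smul _ (inv_ne_zero hbpos.ne')]; exact hw
    have key := hbs u' w' hc1 hc2
    rw [h1, h2] at key
    have e1 : u' ⬝ᵥ Δ.mulVec w' = a⁻¹ * b⁻¹ * (u ⬝ᵥ Δ.mulVec w) := dot_smul_smul Δ _ _ u w
    have e2 : w' ⬝ᵥ Δ.mulVec u' = u' ⬝ᵥ Δ.mulVec w' := (hsd _ _).symm
    rw [e2, e1, ← two_mul, abs_mul, abs_mul, abs_mul,
      abs_of_nonneg (by norm_num : (0:ℝ) ≤ 2),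
      abs_of_nonneg (le_of_lt (inv_pos.mpr hapos)),
      abs_of_nonneg (le_of_lt (inv_pos.mpr hbpos))] at key
    have hfin : |u ⬝ᵥ Δ.mulVec w| ≤ δ * (a * b) := by
      rw [← mul_le_mul_iff_right₀ (show (0:ℝ) < 2 * (a⁻¹ * b⁻¹) by positivity)]
      calc 2 * (a⁻¹ * b⁻¹) * |u ⬝ᵥ Δ.mulVec w| = 2 * (a⁻¹ * b⁻¹ * |u ⬝ᵥ Δ.mulVec w|) := by ring
        _ ≤ δ * (1 + 1) := key
        _ = 2 * (a⁻¹ * b⁻¹) * (δ * (a * b)) := by field_simp; ring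
    linarith [hfin, le_of_eq (show δ * (a * b) = δ * a * b by ring)]

private lemma exists_top {ι : Type*} [DecidableEq ι] (K : Finset ι) (f : ι → ℝ) :
    ∀ n : ℕ, n ≤ K.card → ∃ T ⊆ K, T.card = n ∧ ∀ i ∈ T, ∀ j ∈ K, j ∉ T → f j ≤ f i := by
  intro n
  induction n with
  | zero => intro _; exact ⟨∅, Finset.empty_subset K, rfl, by simp⟩
  | succ m ih =>
    intro hm
    obtain ⟨T, hTK, hTcard, hTtop⟩ := ih (Nat.le_of_succ_le hm)
    have hne : (K \ T).Nonempty := by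
      rw [← Finset.card_pos, Finset.card_sdiff_of_subset hTK]
      omega
    obtain ⟨j₀, hj₀mem, hj₀max⟩ := Finset.exists_max_image (K \ T) f hne
    have hj₀K : j₀ ∈ K := (Finset.mem_sdiff.mp hj₀mem).1
    have hj₀T : j₀ ∉ T := (Finset.mem_sdiff.mp hj₀mem).2
    refine ⟨insert j₀ T, Finset.insert_subset hj₀K hTK, ?_, ?_⟩
    · rw [Finset.card_insert_of_notMem hj₀T, hTcard]
    · intro i hi j hjK hjT
      have hjT' : j ∉ T := fun h => hjT (Finset.mem_insert_of_mem h)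
      rcases Finset.mem_insert.mp hi with h | h
      · subst h
        exact hj₀max j (Finset.mem_sdiff.mpr ⟨hjK, hjT'⟩)
      · exact hTtop i h j hjK hjT'

private lemma split_lemma (s : ℕ) (hs : 0 < s) (v : Fin q → ℝ)
    (h : s < (Finset.univ.filter (fun i => v i ≠ 0)).card) :
    ∃ (a b : Fin q → ℝ) (c' : ℝ),
      v = a + b ∧ 0 ≤ c' ∧
      (Finset.univ.filter (fun i => a i ≠ 0)).card ≤ s ∧
      (Finset.univ.filter (fun i => b i ≠ 0)).card + s
        ≤ (Finset.univ.filter (fun i => v i ≠ 0)).card ∧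
      (∀ i, |b i| ≤ c') ∧
      (s : ℝ) * c' + ∑ i, |b i| = ∑ i, |v i| ∧
      (∑ i, a i ^ 2 ≤ ∑ i, v i ^ 2) ∧
      (∀ c : ℝ, (∀ i, |v i| ≤ c) → ∑ i, a i ^ 2 ≤ (s : ℝ) * c ^ 2) := by
  set K := Finset.univ.filter (fun i => v i ≠ 0) with hK
  obtain ⟨T, hTK, hTcard, hTtop⟩ := exists_top K (fun i => |v i|) s (le_of_lt h)
  refine ⟨fun i => if i ∈ T then v i else 0, fun i => if i ∈ T then 0 else v i,
    (∑ i ∈ T, |v i|) / s, ?_, ?_, ?_, ?_, ?_, ?_, ?_, ?_⟩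
  · funext i; by_cases hi : i ∈ T <;> simp [hi]
  · positivity
  · have hsub : (Finset.univ.filter (fun i => (if i ∈ T then v i else 0) ≠ 0)) ⊆ T := by
      intro i hi
      simp only [Finset.mem_filter] at hi
      by_contra hc
      simp [hc] at hi
    calc _ ≤ T.card := Finset.card_le_card hsub
      _ = s := hTcard
  · show (Finset.univ.filter (fun i => (if i ∈ T then 0 else v i) ≠ 0)).card + s ≤ K.card
    have hsub : (Finset.univ.filter (fun i => (if i ∈ T then 0 else v i) ≠ 0)) ⊆ K \ T := by
      intro i hi
      simp only [Finset.mem_filter, Finset.mem_univ, true_and] at hi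
      by_cases hc : i ∈ T
      · simp [hc] at hi
      · simp only [hc, if_false] at hi
        exact Finset.mem_sdiff.mpr ⟨Finset.mem_filter.mpr ⟨Finset.mem_univ i, hi⟩, hc⟩
    have := Finset.card_le_card hsub
    rw [Finset.card_sdiff_of_subset hTK, hTcard] at this
    omega
  · intro i
    by_cases hc : i ∈ T
    · simp only [hc, if_true, abs_zero]
      positivity
    · simp only [hc, if_false]
      by_cases hv0 : v i = 0
      · rw [hv0, abs_zero]; positivity
      · have hiK : i ∈ K := Finset.mem_filter.mpr ⟨Finset.mem_univ i, hv0⟩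
        have hle : ∀ j ∈ T, |v i| ≤ |v j| := fun j hj => hTtop j hj i hiK hc
        have hsum : (s : ℝ) * |v i| ≤ ∑ j ∈ T, |v j| := by
          calc (s : ℝ) * |v i| = ∑ _j ∈ T, |v i| := by
                rw [Finset.sum_const, hTcard, nsmul_eq_mul]
            _ ≤ ∑ j ∈ T, |v j| := Finset.sum_le_sum hle
        rw [le_div_iff₀ (by exact_mod_cast hs : (0:ℝ) < (s:ℕ))]
        linarith
  · have hspos : (0:ℝ) < s := by exact_mod_cast hs
    have h1 : (s : ℝ) * ((∑ i ∈ T, |v i|) / s) = ∑ i ∈ T, |v i| := by field_simp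
    have h2 : ∑ i, |if i ∈ T then v i else (0:ℝ)| = ∑ i ∈ T, |v i| := by
      rw [show ∑ i, |if i ∈ T then v i else (0:ℝ)| = ∑ i, if i ∈ T then |v i| else 0 from
        Finset.sum_congr rfl fun i _ => by by_cases hi : i ∈ T <;> simp [hi]]
      rw [Finset.sum_ite_mem, Finset.univ_inter]
    have h3 : ∀ i, |v i| = |if i ∈ T then v i else (0:ℝ)| + |if i ∈ T then (0:ℝ) else v i| := by
      intro i; by_cases hi : i ∈ T <;> simp [hi]
    rw [h1, show ∑ i, |v i| = ∑ i, (|if i ∈ T then v i else (0:ℝ)| + |if i ∈ T then (0:ℝ) else v i|)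
      from Finset.sum_congr rfl fun i _ => h3 i, Finset.sum_add_distrib, h2]
  · apply Finset.sum_le_sum
    intro i _
    by_cases hi : i ∈ T <;> simp [hi] <;> positivity
  · intro c hc
    have h2 : ∑ i, (if i ∈ T then v i else (0:ℝ)) ^ 2 = ∑ i ∈ T, v i ^ 2 := by
      rw [show ∑ i, (if i ∈ T then v i else (0:ℝ)) ^ 2 = ∑ i, if i ∈ T then v i ^ 2 else 0 from
        Finset.sum_congr rfl fun i _ => by by_cases hi : i ∈ T <;> simp [hi]]
      rw [Finset.sum_ite_mem, Finset.univ_inter]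
    rw [h2]
    calc ∑ i ∈ T, v i ^ 2 ≤ ∑ _i ∈ T, c ^ 2 := by
          apply Finset.sum_le_sum
          intro i _
          calc v i ^ 2 = |v i| ^ 2 := (sq_abs _).symm
            _ ≤ c ^ 2 := by nlinarith [hc i, abs_nonneg (v i)]
      _ = (s : ℝ) * c ^ 2 := by rw [Finset.sum_const, hTcard, nsmul_eq_mul]


private lemma sparse_norm_le (s : ℕ) (v : Fin q → ℝ) (c : ℝ) (hc : 0 ≤ c)
    (hvc : ∀ i, |v i| ≤ c)
    (hv : (Finset.univ.filter (fun i => v i ≠ 0)).card ≤ s) :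
    Real.sqrt (∑ i, v i ^ 2) ≤ Real.sqrt s * c := by
  have h1 : ∑ i, v i ^ 2 = ∑ i ∈ Finset.univ.filter (fun i => v i ≠ 0), v i ^ 2 := by
    refine (Finset.sum_subset (Finset.subset_univ _) ?_).symm
    intro i _ hi
    simp only [Finset.mem_filter, Finset.mem_univ, true_and, not_not] at hi
    rw [hi]; ring
  have h2 : ∑ i, v i ^ 2 ≤ (s : ℝ) * c ^ 2 := by
    rw [h1]
    calc ∑ i ∈ Finset.univ.filter (fun i => v i ≠ 0), v i ^ 2
        ≤ ∑ _i ∈ Finset.univ.filter (fun i => v i ≠ 0), c ^ 2 := by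
          apply Finset.sum_le_sum
          intro i _
          nlinarith [hvc i, abs_nonneg (v i), sq_abs (v i)]
      _ = ((Finset.univ.filter (fun i => v i ≠ 0)).card : ℝ) * c ^ 2 := by
          rw [Finset.sum_const, nsmul_eq_mul]
      _ ≤ (s : ℝ) * c ^ 2 := by
          apply mul_le_mul_of_nonneg_right _ (sq_nonneg c)
          exact_mod_cast hv
  calc Real.sqrt (∑ i, v i ^ 2) ≤ Real.sqrt ((s : ℝ) * c ^ 2) := Real.sqrt_le_sqrt h2
    _ = Real.sqrt s * c := by
        rw [Real.sqrt_mul (Nat.cast_nonneg s), Real.sqrt_sq hc]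

private lemma Ekey (Δ : Matrix (Fin q) (Fin q) ℝ) (δ : ℝ) (s : ℕ) (hδ : 0 ≤ δ)
    (hs : 0 < s) (hsym : Δ.IsSymm)
    (hq2 : ∀ x : Fin q → ℝ, ((Finset.univ.filter (fun i => x i ≠ 0)).card ≤ 2 * s) →
      |x ⬝ᵥ Δ.mulVec x| ≤ δ * ∑ i, x i ^ 2) :
    ∀ n : ℕ, ∀ v u : Fin q → ℝ, ∀ c : ℝ, 0 ≤ c → (∀ i, |v i| ≤ c) →
      (Finset.univ.filter (fun i => v i ≠ 0)).card ≤ n →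
      (Finset.univ.filter (fun i => u i ≠ 0)).card ≤ s →
      |u ⬝ᵥ Δ.mulVec v| ≤ δ * Real.sqrt (∑ i, u i ^ 2) *
        (min (Real.sqrt s * c) (Real.sqrt (∑ i, v i ^ 2)) + (∑ i, |v i|) / Real.sqrt s) := by
  have hrs : (0:ℝ) < Real.sqrt s := Real.sqrt_pos.mpr (by exact_mod_cast hs)
  have base : ∀ v u : Fin q → ℝ, ∀ c : ℝ, 0 ≤ c → (∀ i, |v i| ≤ c) →
      (Finset.univ.filter (fun i => v i ≠ 0)).card ≤ s →
      (Finset.univ.filter (fun i => u i ≠ 0)).card ≤ s →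
      |u ⬝ᵥ Δ.mulVec v| ≤ δ * Real.sqrt (∑ i, u i ^ 2) *
        (min (Real.sqrt s * c) (Real.sqrt (∑ i, v i ^ 2)) + (∑ i, |v i|) / Real.sqrt s) := by
    intro v u c hc hvc hv hu
    have h1 := bilin Δ δ s hδ hsym hq2 u v hu hv
    have h2 : Real.sqrt (∑ i, v i ^ 2)
        ≤ min (Real.sqrt s * c) (Real.sqrt (∑ i, v i ^ 2)) :=
      le_min (sparse_norm_le s v c hc hvc hv) le_rfl
    have h3 : (0:ℝ) ≤ (∑ i, |v i|) / Real.sqrt s :=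
      div_nonneg (Finset.sum_nonneg fun i _ => abs_nonneg _) hrs.le
    have h4 : (0:ℝ) ≤ δ * Real.sqrt (∑ i, u i ^ 2) := by positivity
    calc |u ⬝ᵥ Δ.mulVec v| ≤ δ * Real.sqrt (∑ i, u i ^ 2) * Real.sqrt (∑ i, v i ^ 2) := h1
      _ ≤ _ := by
          apply mul_le_mul_of_nonneg_left _ h4
          linarith
  intro n
  induction n with
  | zero =>
    intro v u c hc hvc hv hu
    exact base v u c hc hvc (le_trans hv (Nat.zero_le s)) hu
  | succ m ih =>
    intro v u c hc hvc hv hu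
    by_cases hsmall : (Finset.univ.filter (fun i => v i ≠ 0)).card ≤ s
    · exact base v u c hc hvc hsmall hu
    · push_neg at hsmall
      obtain ⟨a, b, c', hab, hc', hacard, hbcard, hbc', hl1, hasum, hasum2⟩ :=
        split_lemma s hs v hsmall
      have hbn : (Finset.univ.filter (fun i => b i ≠ 0)).card ≤ m := by omega
      have hdecomp : u ⬝ᵥ Δ.mulVec v = u ⬝ᵥ Δ.mulVec a + u ⬝ᵥ Δ.mulVec b := by
        rw [show Δ.mulVec v = Δ.mulVec a + Δ.mulVec b from by rw [hab, mulVec_add],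
          dotProduct_add]
      -- bound on the a part
      have hA4 : (0:ℝ) ≤ δ * Real.sqrt (∑ i, u i ^ 2) := by positivity
      have hba : |u ⬝ᵥ Δ.mulVec a| ≤ δ * Real.sqrt (∑ i, u i ^ 2) *
          (min (Real.sqrt s * c) (Real.sqrt (∑ i, v i ^ 2))) := by
        have h1 := bilin Δ δ s hδ hsym hq2 u a hu hacard
        have h2 : Real.sqrt (∑ i, a i ^ 2) ≤ min (Real.sqrt s * c) (Real.sqrt (∑ i, v i ^ 2)) := by
          apply le_min
          · calc Real.sqrt (∑ i, a i ^ 2) ≤ Real.sqrt ((s:ℝ) * c ^ 2) :=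
                  Real.sqrt_le_sqrt (hasum2 c hvc)
              _ = Real.sqrt s * c := by
                  rw [Real.sqrt_mul (Nat.cast_nonneg s), Real.sqrt_sq hc]
          · exact Real.sqrt_le_sqrt hasum
        calc |u ⬝ᵥ Δ.mulVec a| ≤ δ * Real.sqrt (∑ i, u i ^ 2) * Real.sqrt (∑ i, a i ^ 2) := h1
          _ ≤ _ := mul_le_mul_of_nonneg_left h2 hA4
      -- bound on the b part
      have hbb : |u ⬝ᵥ Δ.mulVec b| ≤ δ * Real.sqrt (∑ i, u i ^ 2) *
          ((∑ i, |v i|) / Real.sqrt s) := by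
        have h1 := ih b u c' hc' hbc' hbn hu
        have h2 : min (Real.sqrt s * c') (Real.sqrt (∑ i, b i ^ 2)) + (∑ i, |b i|) / Real.sqrt s
            ≤ (∑ i, |v i|) / Real.sqrt s := by
          have h3 : Real.sqrt s * c' + (∑ i, |b i|) / Real.sqrt s
              = (∑ i, |v i|) / Real.sqrt s := by
            rw [← hl1]
            field_simp
            nlinarith [Real.sq_sqrt (Nat.cast_nonneg s : (0:ℝ) ≤ (s:ℕ))]
          calc min (Real.sqrt s * c') (Real.sqrt (∑ i, b i ^ 2)) + (∑ i, |b i|) / Real.sqrt s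
              ≤ Real.sqrt s * c' + (∑ i, |b i|) / Real.sqrt s :=
                add_le_add_left (min_le_left _ _) _
            _ = _ := h3
        calc |u ⬝ᵥ Δ.mulVec b| ≤ _ := h1
          _ ≤ _ := mul_le_mul_of_nonneg_left h2 hA4
      calc |u ⬝ᵥ Δ.mulVec v| = |u ⬝ᵥ Δ.mulVec a + u ⬝ᵥ Δ.mulVec b| := by rw [hdecomp]
        _ ≤ |u ⬝ᵥ Δ.mulVec a| + |u ⬝ᵥ Δ.mulVec b| := abs_add_le _ _
        _ ≤ _ := by
            rw [mul_add]
            exact add_le_add hba hbb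

private lemma Fkey (Δ : Matrix (Fin q) (Fin q) ℝ) (δ : ℝ) (s : ℕ) (hδ : 0 ≤ δ)
    (hs : 0 < s) (hsym : Δ.IsSymm)
    (hq2 : ∀ x : Fin q → ℝ, ((Finset.univ.filter (fun i => x i ≠ 0)).card ≤ 2 * s) →
      |x ⬝ᵥ Δ.mulVec x| ≤ δ * ∑ i, x i ^ 2) :
    ∀ n : ℕ, ∀ v : Fin q → ℝ, ∀ c : ℝ, 0 ≤ c → (∀ i, |v i| ≤ c) →
      (Finset.univ.filter (fun i => v i ≠ 0)).card ≤ n →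
      |v ⬝ᵥ Δ.mulVec v| ≤ δ *
        (min (Real.sqrt s * c) (Real.sqrt (∑ i, v i ^ 2)) + (∑ i, |v i|) / Real.sqrt s) ^ 2 := by
  have hrs : (0:ℝ) < Real.sqrt s := Real.sqrt_pos.mpr (by exact_mod_cast hs)
  have base : ∀ v : Fin q → ℝ, ∀ c : ℝ, 0 ≤ c → (∀ i, |v i| ≤ c) →
      (Finset.univ.filter (fun i => v i ≠ 0)).card ≤ s →
      |v ⬝ᵥ Δ.mulVec v| ≤ δ *
        (min (Real.sqrt s * c) (Real.sqrt (∑ i, v i ^ 2)) + (∑ i, |v i|) / Real.sqrt s) ^ 2 := by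
    intro v c hc hvc hv
    have h1 := hq2 v (le_trans hv (by omega))
    have hS0 : (0:ℝ) ≤ ∑ i, v i ^ 2 := Finset.sum_nonneg fun i _ => sq_nonneg _
    have h2 : Real.sqrt (∑ i, v i ^ 2)
        ≤ min (Real.sqrt s * c) (Real.sqrt (∑ i, v i ^ 2)) :=
      le_min (sparse_norm_le s v c hc hvc hv) le_rfl
    have h3 : (0:ℝ) ≤ (∑ i, |v i|) / Real.sqrt s :=
      div_nonneg (Finset.sum_nonneg fun i _ => abs_nonneg _) hrs.le
    have h4 : ∑ i, v i ^ 2 = Real.sqrt (∑ i, v i ^ 2) ^ 2 := (Real.sq_sqrt hS0).symm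
    have h5 : (0:ℝ) ≤ Real.sqrt (∑ i, v i ^ 2) := Real.sqrt_nonneg _
    calc |v ⬝ᵥ Δ.mulVec v| ≤ δ * ∑ i, v i ^ 2 := h1
      _ ≤ _ := by
          apply mul_le_mul_of_nonneg_left _ hδ
          nlinarith [h2, h3, h5, h4]
  intro n
  induction n with
  | zero =>
    intro v c hc hvc hv
    exact base v c hc hvc (le_trans hv (Nat.zero_le s))
  | succ m ih =>
    intro v c hc hvc hv
    by_cases hsmall : (Finset.univ.filter (fun i => v i ≠ 0)).card ≤ s
    · exact base v c hc hvc hsmall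
    · push_neg at hsmall
      obtain ⟨a, b, c', hab, hc', hacard, hbcard, hbc', hl1, hasum, hasum2⟩ :=
        split_lemma s hs v hsmall
      have hbn : (Finset.univ.filter (fun i => b i ≠ 0)).card ≤ m := by omega
      set M := min (Real.sqrt s * c) (Real.sqrt (∑ i, v i ^ 2)) with hM
      set l := (∑ i, |v i|) / Real.sqrt s with hl
      have hM0 : 0 ≤ M := le_min (by positivity) (Real.sqrt_nonneg _)
      have hl0 : 0 ≤ l := div_nonneg (Finset.sum_nonneg fun i _ => abs_nonneg _) hrs.le
      have hsd : ∀ u' w' : Fin q → ℝ, u' ⬝ᵥ Δ.mulVec w' = w' ⬝ᵥ Δ.mulVec u' := by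
        intro u' w'
        rw [dotProduct_mulVec, ← mulVec_transpose, hsym.eq, dotProduct_comm]
      have hdec : v ⬝ᵥ Δ.mulVec v
          = a ⬝ᵥ Δ.mulVec a + 2 * (a ⬝ᵥ Δ.mulVec b) + b ⬝ᵥ Δ.mulVec b := by
        rw [hab]
        simp only [mulVec_add, dotProduct_add, add_dotProduct]
        rw [hsd b a]
        ring
      -- sqrt(∑ a²) ≤ M
      have hsqa : Real.sqrt (∑ i, a i ^ 2) ≤ M := by
        apply le_min
        · calc Real.sqrt (∑ i, a i ^ 2) ≤ Real.sqrt ((s:ℝ) * c ^ 2) :=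
              Real.sqrt_le_sqrt (hasum2 c hvc)
            _ = Real.sqrt s * c := by
                rw [Real.sqrt_mul (Nat.cast_nonneg s), Real.sqrt_sq hc]
        · exact Real.sqrt_le_sqrt hasum
      have hsa0 : (0:ℝ) ≤ ∑ i, a i ^ 2 := Finset.sum_nonneg fun i _ => sq_nonneg _
      have haa : |a ⬝ᵥ Δ.mulVec a| ≤ δ * M ^ 2 := by
        calc |a ⬝ᵥ Δ.mulVec a| ≤ δ * ∑ i, a i ^ 2 := hq2 a (le_trans hacard (by omega))
          _ ≤ δ * M ^ 2 := by
              apply mul_le_mul_of_nonneg_left _ hδ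
              rw [show ∑ i, a i ^ 2 = Real.sqrt (∑ i, a i ^ 2) ^ 2 from (Real.sq_sqrt hsa0).symm]
              exact pow_le_pow_left₀ (Real.sqrt_nonneg _) hsqa 2
      -- key l1 computation
      have hkey : Real.sqrt s * c' + (∑ i, |b i|) / Real.sqrt s = l := by
        rw [hl, ← hl1]
        field_simp
        nlinarith [Real.sq_sqrt (Nat.cast_nonneg s : (0:ℝ) ≤ (s:ℕ))]
      have hmin0 : (0:ℝ) ≤ min (Real.sqrt s * c') (Real.sqrt (∑ i, b i ^ 2)) :=
        le_min (by positivity) (Real.sqrt_nonneg _)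
      have hinner : min (Real.sqrt s * c') (Real.sqrt (∑ i, b i ^ 2))
          + (∑ i, |b i|) / Real.sqrt s ≤ l := by
        calc _ ≤ Real.sqrt s * c' + (∑ i, |b i|) / Real.sqrt s :=
              add_le_add_left (min_le_left _ _) _
          _ = l := hkey
      have hab' : |a ⬝ᵥ Δ.mulVec b| ≤ δ * M * l := by
        have h1 := Ekey Δ δ s hδ hs hsym hq2
          ((Finset.univ.filter (fun i => b i ≠ 0)).card) b a c' hc' hbc' le_rfl hacard
        have h2 : δ * Real.sqrt (∑ i, a i ^ 2) *
            (min (Real.sqrt s * c') (Real.sqrt (∑ i, b i ^ 2)) + (∑ i, |b i|) / Real.sqrt s)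
            ≤ δ * M * l := by
          apply mul_le_mul
          · exact mul_le_mul_of_nonneg_left hsqa hδ
          · exact hinner
          · positivity
          · positivity
        exact le_trans h1 h2
      have hbb : |b ⬝ᵥ Δ.mulVec b| ≤ δ * l ^ 2 := by
        have h1 := ih b c' hc' hbc' hbn
        have h2 : (min (Real.sqrt s * c') (Real.sqrt (∑ i, b i ^ 2))
            + (∑ i, |b i|) / Real.sqrt s) ^ 2 ≤ l ^ 2 := by
          apply pow_le_pow_left₀ _ hinner 2
          positivity
        calc |b ⬝ᵥ Δ.mulVec b| ≤ _ := h1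
          _ ≤ δ * l ^ 2 := mul_le_mul_of_nonneg_left h2 hδ
      calc |v ⬝ᵥ Δ.mulVec v|
          = |a ⬝ᵥ Δ.mulVec a + 2 * (a ⬝ᵥ Δ.mulVec b) + b ⬝ᵥ Δ.mulVec b| := by rw [hdec]
        _ ≤ |a ⬝ᵥ Δ.mulVec a + 2 * (a ⬝ᵥ Δ.mulVec b)| + |b ⬝ᵥ Δ.mulVec b| := abs_add_le _ _
        _ ≤ |a ⬝ᵥ Δ.mulVec a| + |2 * (a ⬝ᵥ Δ.mulVec b)| + |b ⬝ᵥ Δ.mulVec b| := by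
            have := abs_add_le (a ⬝ᵥ Δ.mulVec a) (2 * (a ⬝ᵥ Δ.mulVec b))
            linarith
        _ ≤ δ * M ^ 2 + 2 * (δ * M * l) + δ * l ^ 2 := by
            rw [abs_mul, abs_of_nonneg (by norm_num : (0:ℝ) ≤ 2)]
            linarith [haa, hab', hbb]
        _ = δ * (M + l) ^ 2 := by ring
end Helpers

/-- If the population covariance has smallest eigenvalue at least `1/M₁` and the
symmetric matrix `S` is close to it on all `2s`-sparse unit vectors, then `S`
satisfies the lower-RE condition with curvature `(1/M₁)(1 − 27/L)` and tolerance
`27/(s M₁ L)`. -/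
theorem lowerRE_of_sparse_approximation {q : ℕ} (Sx S : Matrix (Fin q) (Fin q) ℝ)
    (hSx : Sx.IsSymm) (hS : S.IsSymm) (M₁ L : ℝ) (s : ℕ)
    (hM₁ : 0 < M₁) (hL : 27 < L) (hs : 0 < s)
    (heig : ∀ v : Fin q → ℝ, (1 / M₁) * (∑ i, v i ^ 2) ≤ v ⬝ᵥ Sx.mulVec v)
    (hsparse : ∀ v : Fin q → ℝ, (∑ i, v i ^ 2 = 1) →
      ((Finset.univ.filter (fun i => v i ≠ 0)).card ≤ 2 * s) →
      |v ⬝ᵥ (S - Sx).mulVec v| ≤ 1 / (L * M₁)) :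
    ∀ v : Fin q → ℝ,
      (1 / M₁) * (1 - 27 / L) * (∑ i, v i ^ 2)
          - (27 / (s * M₁ * L)) * (∑ i, |v i|) ^ 2
        ≤ v ⬝ᵥ S.mulVec v := by
  intro v
  have hL0 : (0:ℝ) < L := lt_trans (by norm_num) hL
  have hδ : (0:ℝ) ≤ 1 / (L * M₁) := by positivity
  have hsym : (S - Sx).IsSymm := hS.sub hSx
  have hq2 := quad_scaled (S - Sx) (1 / (L * M₁)) s hsparse
  set X := ∑ i, v i ^ 2 with hX
  set Y := ∑ i, |v i| with hY
  have hX0 : (0:ℝ) ≤ X := Finset.sum_nonneg fun i _ => sq_nonneg _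
  have hY0 : (0:ℝ) ≤ Y := Finset.sum_nonneg fun i _ => abs_nonneg _
  have hvc : ∀ i, |v i| ≤ Y := fun i =>
    Finset.single_le_sum (f := fun i => |v i|) (fun j _ => abs_nonneg _) (Finset.mem_univ i)
  have happ := Fkey (S - Sx) (1 / (L * M₁)) s hδ hs hsym hq2
    ((Finset.univ.filter (fun i => v i ≠ 0)).card) v Y hY0 hvc le_rfl
  have hrs : (0:ℝ) < Real.sqrt s := Real.sqrt_pos.mpr (by exact_mod_cast hs)
  have hs0 : (0:ℝ) < (s:ℝ) := by exact_mod_cast hs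
  -- squared bound
  have hsq : (min (Real.sqrt s * Y) (Real.sqrt X) + Y / Real.sqrt s) ^ 2
      ≤ 2 * X + 2 * (Y ^ 2 / s) := by
    have hp : Real.sqrt X ^ 2 = X := Real.sq_sqrt hX0
    have hr : (Y / Real.sqrt s) ^ 2 = Y ^ 2 / s := by
      rw [div_pow, Real.sq_sqrt (le_of_lt (by exact_mod_cast hs : (0:ℝ) < (s:ℕ)))]
    have hmin : min (Real.sqrt s * Y) (Real.sqrt X) ≤ Real.sqrt X := min_le_right _ _
    have hmin0 : 0 ≤ min (Real.sqrt s * Y) (Real.sqrt X) :=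
      le_min (by positivity) (Real.sqrt_nonneg _)
    have hr0 : (0:ℝ) ≤ Y / Real.sqrt s := by positivity
    nlinarith [sq_nonneg (Real.sqrt X - Y / Real.sqrt s), hp, hr, hmin, hmin0, hr0,
      Real.sqrt_nonneg X]
  have habs : |v ⬝ᵥ (S - Sx).mulVec v| ≤ 1 / (L * M₁) * (2 * X + 2 * (Y ^ 2 / s)) :=
    le_trans happ (mul_le_mul_of_nonneg_left hsq hδ)
  have hPX : (0:ℝ) ≤ 1 / (L * M₁) * X := by positivity
  have hQY : (0:ℝ) ≤ 1 / (L * M₁) * (Y ^ 2 / s) := by positivity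
  have hring : 1 / (L * M₁) * (2 * X + 2 * (Y ^ 2 / s))
      = 2 * (1 / (L * M₁) * X) + 2 * (1 / (L * M₁) * (Y ^ 2 / s)) := by ring
  have hB : -(27 * (1 / (L * M₁) * X) + 27 * (1 / (L * M₁) * (Y ^ 2 / s)))
      ≤ v ⬝ᵥ (S - Sx).mulVec v := by
    have h1 := neg_abs_le (v ⬝ᵥ (S - Sx).mulVec v)
    linarith [habs, hring, hPX, hQY]
  have hsplit : v ⬝ᵥ (S - Sx).mulVec v = v ⬝ᵥ S.mulVec v - v ⬝ᵥ Sx.mulVec v := by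
    rw [sub_mulVec, dotProduct_sub]
  have egoal : (1 / M₁) * (1 - 27 / L) * X - (27 / ((s:ℝ) * M₁ * L)) * Y ^ 2
      = (1 / M₁) * X - (27 * (1 / (L * M₁) * X) + 27 * (1 / (L * M₁) * (Y ^ 2 / s))) := by
    field_simp
    ring
  rw [egoal]
  linarith [heig v, hB, hsplit]
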